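/- Let Γ be a finite simplicial graph that is disconnected and has no separating intersections of links (no SILs). Then the associated right-angled Artin group A_Γ is isomorphic to a free product ℤⁿ ∗ ℤᵐ for some n, m ≥ 1; equivalently, Γ has exactly two connected components, and each of them is a complete graph. -/

import Mathlib

/-- The right-angled Artin group of a simplicial graph. -/
def RAAG {V : Type} (G : SimpleGraph V) : Type :=
  PresentedGroup {r : FreeGroup V | ∃ u v : V, G.Adj u v ∧
    r = FreeGroup.of u * FreeGroup.of v * (FreeGroup.of u)⁻¹ * (FreeGroup.of v)⁻¹}

instance {V : Type} (G : SimpleGraph V) : Group (RAAG G) := by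
  unfold RAAG; infer_instance

/-- The vertex set of `Γ \ (lk u ∩ lk v)`. -/
def SILSet {V : Type} (G : SimpleGraph V) (u v : V) : Set V :=
  {x : V | ¬(G.Adj x u ∧ G.Adj x v)}

/-- The pair `(u, v)` forms a separating intersection of links: `u ≠ v`,
`u` and `v` are non-adjacent, and some connected component of
`Γ \ (lk u ∩ lk v)` contains neither `u` nor `v`. -/
def FormsSIL {V : Type} (G : SimpleGraph V) (u v : V) : Prop :=
  u ≠ v ∧ ¬ G.Adj u v ∧
  ∃ w : SILSet G u v,
    (G.induce (SILSet G u v)).connectedComponentMk w ≠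
      (G.induce (SILSet G u v)).connectedComponentMk
        ⟨u, fun h => G.loopless.irrefl u h.1⟩ ∧
    (G.induce (SILSet G u v)).connectedComponentMk w ≠
      (G.induce (SILSet G u v)).connectedComponentMk
        ⟨v, fun h => G.loopless.irrefl v h.2⟩

open Multiplicative

def RaagRels {V : Type} (G : SimpleGraph V) : Set (FreeGroup V) :=
  {r : FreeGroup V | ∃ u v : V, G.Adj u v ∧
    r = FreeGroup.of u * FreeGroup.of v * (FreeGroup.of u)⁻¹ * (FreeGroup.of v)⁻¹}

def raagOf {V : Type} (G : SimpleGraph V) (v : V) : RAAG G :=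
  (PresentedGroup.of (rels := RaagRels G) v : PresentedGroup (RaagRels G))

theorem raag_comm {V : Type} (G : SimpleGraph V) {u v : V} (h : G.Adj u v) :
    Commute (raagOf G u) (raagOf G v) := by
  have h1 : raagOf G u * raagOf G v * (raagOf G u)⁻¹ * (raagOf G v)⁻¹ = 1 := by
    show (QuotientGroup.mk (FreeGroup.of u * FreeGroup.of v * (FreeGroup.of u)⁻¹ *
        (FreeGroup.of v)⁻¹ : FreeGroup V) : PresentedGroup (RaagRels G)) = 1
    rw [QuotientGroup.eq_one_iff]
    exact Subgroup.subset_normalClosure ⟨u, v, h, rfl⟩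
  rw [commute_iff_eq]
  calc raagOf G u * raagOf G v
      = (raagOf G u * raagOf G v * (raagOf G u)⁻¹ * (raagOf G v)⁻¹) *
        (raagOf G v * raagOf G u) := by group
    _ = raagOf G v * raagOf G u := by rw [h1, one_mul]

noncomputable def expHom {k : ℕ} {K : Type*} [CommGroup K] (g : Fin k → K) :
    Multiplicative (Fin k → ℤ) →* K where
  toFun x := ∏ i, g i ^ (Multiplicative.toAdd x i)
  map_one' := by simp
  map_mul' x y := by simp [zpow_add, Finset.prod_mul_distrib]

theorem expHom_single {k : ℕ} {K : Type*} [CommGroup K] (g : Fin k → K) (i : Fin k) :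
    expHom g (ofAdd (Pi.single i 1)) = g i := by
  simp only [expHom, MonoidHom.coe_mk, OneHom.coe_mk, toAdd_ofAdd]
  rw [Finset.prod_eq_single i]
  · rw [Pi.single_eq_same, zpow_one]
  · intro b _ hb
    rw [Pi.single_eq_of_ne hb, zpow_zero]
  · intro h; exact absurd (Finset.mem_univ i) h

noncomputable def sideHom {V : Type} (G : SimpleGraph V) {k : ℕ} {P : V → Prop}
    (e : {v : V // P v} ≃ Fin k)
    (hP : ∀ u v : V, P u → P v → u ≠ v → G.Adj u v) :
    Multiplicative (Fin k → ℤ) →* RAAG G :=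
  letI : CommGroup (Subgroup.closure (Set.range fun a : {v : V // P v} => raagOf G a.1)) :=
    Subgroup.closureCommGroupOfComm (by
      rintro x ⟨a, rfl⟩ y ⟨b, rfl⟩
      by_cases hab : (a : V) = b
      · rw [show a = b from Subtype.ext hab]
      · exact raag_comm G (hP a b a.2 b.2 hab))
  (Subgroup.closure (Set.range fun a : {v : V // P v} => raagOf G a.1)).subtype.comp
    (expHom fun i => ⟨raagOf G (e.symm i).1, Subgroup.subset_closure ⟨e.symm i, rfl⟩⟩)

theorem sideHom_single {V : Type} (G : SimpleGraph V) {k : ℕ} {P : V → Prop}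
    (e : {v : V // P v} ≃ Fin k)
    (hP : ∀ u v : V, P u → P v → u ≠ v → G.Adj u v) (i : Fin k) :
    sideHom G e hP (ofAdd (Pi.single i 1)) = raagOf G (e.symm i).1 := by
  letI : CommGroup (Subgroup.closure (Set.range fun a : {v : V // P v} => raagOf G a.1)) :=
    Subgroup.closureCommGroupOfComm (by
      rintro x ⟨a, rfl⟩ y ⟨b, rfl⟩
      by_cases hab : (a : V) = b
      · rw [show a = b from Subtype.ext hab]
      · exact raag_comm G (hP a b a.2 b.2 hab))
  simp only [sideHom, MonoidHom.comp_apply]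
  rw [expHom_single]
  rfl

open Classical in
noncomputable def raagFwdFun {V : Type} (G : SimpleGraph V) (C : G.ConnectedComponent)
    {n m : ℕ} (eA : {v : V // G.connectedComponentMk v = C} ≃ Fin n)
    (eB : {v : V // G.connectedComponentMk v ≠ C} ≃ Fin m) (v : V) :
    Monoid.Coprod (Multiplicative (Fin n → ℤ)) (Multiplicative (Fin m → ℤ)) :=
  if h : G.connectedComponentMk v = C then
    Monoid.Coprod.inl (ofAdd (Pi.single (eA ⟨v, h⟩) (1 : ℤ)))
  else
    Monoid.Coprod.inr (ofAdd (Pi.single (eB ⟨v, h⟩) (1 : ℤ)))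

theorem raagFwd_rels {V : Type} (G : SimpleGraph V) (C : G.ConnectedComponent)
    {n m : ℕ} (eA : {v : V // G.connectedComponentMk v = C} ≃ Fin n)
    (eB : {v : V // G.connectedComponentMk v ≠ C} ≃ Fin m) :
    ∀ r ∈ RaagRels G, FreeGroup.lift (raagFwdFun G C eA eB) r = 1 := by
  rintro r ⟨u, v, huv, rfl⟩
  simp only [map_mul, map_inv, FreeGroup.lift_apply_of]
  have hc : G.connectedComponentMk u = G.connectedComponentMk v :=
    SimpleGraph.ConnectedComponent.sound huv.reachable
  have hcomm : Commute (raagFwdFun G C eA eB u) (raagFwdFun G C eA eB v) := by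
    unfold raagFwdFun
    by_cases h : G.connectedComponentMk u = C
    · rw [dif_pos h, dif_pos (hc ▸ h)]
      exact (Commute.all _ _).map _
    · rw [dif_neg h, dif_neg (hc ▸ h)]
      exact (Commute.all _ _).map _
  rw [hcomm.eq, mul_inv_cancel_right, mul_inv_cancel]

noncomputable def raagFwd {V : Type} (G : SimpleGraph V) (C : G.ConnectedComponent)
    {n m : ℕ} (eA : {v : V // G.connectedComponentMk v = C} ≃ Fin n)
    (eB : {v : V // G.connectedComponentMk v ≠ C} ≃ Fin m) :
    RAAG G →* Monoid.Coprod (Multiplicative (Fin n → ℤ)) (Multiplicative (Fin m → ℤ)) :=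
  PresentedGroup.toGroup (raagFwd_rels G C eA eB)

theorem raagFwd_of {V : Type} (G : SimpleGraph V) (C : G.ConnectedComponent)
    {n m : ℕ} (eA : {v : V // G.connectedComponentMk v = C} ≃ Fin n)
    (eB : {v : V // G.connectedComponentMk v ≠ C} ≃ Fin m) (v : V) :
    raagFwd G C eA eB (raagOf G v) = raagFwdFun G C eA eB v :=
  PresentedGroup.toGroup.of _

theorem multPi_hom_ext {n : ℕ} {M : Type*} [Group M]
    {f g : Multiplicative (Fin n → ℤ) →* M}
    (h : ∀ i, f (ofAdd (Pi.single i 1)) = g (ofAdd (Pi.single i 1))) : f = g := by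
  refine MonoidHom.ext fun x => ?_
  have hx : x = (List.ofFn fun i => (ofAdd (Pi.single i (1 : ℤ))) ^ (Multiplicative.toAdd x i)).prod := by
    rw [List.prod_ofFn]
    have h1 : (Multiplicative.toAdd x) = ∑ i : Fin n, Pi.single i (Multiplicative.toAdd x i) :=
      (Finset.univ_sum_single _).symm
    calc x = ofAdd (Multiplicative.toAdd x) := rfl
      _ = ofAdd (∑ i : Fin n, Pi.single i (Multiplicative.toAdd x i)) := by rw [← h1]
      _ = ∏ i : Fin n, ofAdd (Pi.single i (Multiplicative.toAdd x i)) := ofAdd_sum _ _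
      _ = ∏ i : Fin n, (ofAdd (Pi.single i (1 : ℤ))) ^ (Multiplicative.toAdd x i) := by
          refine Finset.prod_congr rfl fun i _ => ?_
          rw [← ofAdd_zsmul]
          congr 1
          funext j
          by_cases hj : j = i
          · subst hj; simp
          · simp [Pi.single_eq_of_ne hj]
  rw [hx, map_list_prod, map_list_prod, List.map_ofFn, List.map_ofFn]
  refine congrArg List.prod (congrArg List.ofFn (funext fun i => ?_))
  simp only [Function.comp_apply, map_zpow, h i]

theorem raag_iso {V : Type} (G : SimpleGraph V) (C : G.ConnectedComponent)
    {n m : ℕ} (eA : {v : V // G.connectedComponentMk v = C} ≃ Fin n)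
    (eB : {v : V // G.connectedComponentMk v ≠ C} ≃ Fin m)
    (hA : ∀ u v : V, G.connectedComponentMk u = C → G.connectedComponentMk v = C →
      u ≠ v → G.Adj u v)
    (hB : ∀ u v : V, G.connectedComponentMk u ≠ C → G.connectedComponentMk v ≠ C →
      u ≠ v → G.Adj u v) :
    Nonempty (RAAG G ≃*
      Monoid.Coprod (Multiplicative (Fin n → ℤ)) (Multiplicative (Fin m → ℤ))) := by
  let fwd := raagFwd G C eA eB
  let bwd := Monoid.Coprod.lift (sideHom G eA hA) (sideHom G eB hB)
  refine ⟨MonoidHom.toMulEquiv fwd bwd ?_ ?_⟩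
  · apply PresentedGroup.ext
    intro v
    show bwd (fwd (raagOf G v)) = raagOf G v
    rw [show fwd (raagOf G v) = raagFwdFun G C eA eB v from raagFwd_of G C eA eB v]
    unfold raagFwdFun
    by_cases h : G.connectedComponentMk v = C
    · rw [dif_pos h]
      show bwd (Monoid.Coprod.inl _) = _
      show (Monoid.Coprod.lift (sideHom G eA hA) (sideHom G eB hB)) (Monoid.Coprod.inl _) = _
      rw [Monoid.Coprod.lift_apply_inl, sideHom_single, Equiv.symm_apply_apply]
    · rw [dif_neg h]
      show (Monoid.Coprod.lift (sideHom G eA hA) (sideHom G eB hB)) (Monoid.Coprod.inr _) = _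
      rw [Monoid.Coprod.lift_apply_inr, sideHom_single, Equiv.symm_apply_apply]
  · apply Monoid.Coprod.hom_ext
    · apply multPi_hom_ext
      intro i
      show fwd (bwd (Monoid.Coprod.inl (ofAdd (Pi.single i 1)))) =
        Monoid.Coprod.inl (ofAdd (Pi.single i 1))
      show fwd ((Monoid.Coprod.lift (sideHom G eA hA) (sideHom G eB hB))
        (Monoid.Coprod.inl (ofAdd (Pi.single i 1)))) = _
      rw [Monoid.Coprod.lift_apply_inl, sideHom_single]
      rw [show fwd (raagOf G (eA.symm i).1) = raagFwdFun G C eA eB (eA.symm i).1 from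
        raagFwd_of G C eA eB _]
      unfold raagFwdFun
      rw [dif_pos (eA.symm i).2]
      have h2 : eA ⟨(eA.symm i).1, (eA.symm i).2⟩ = i := eA.apply_symm_apply i
      rw [h2]
    · apply multPi_hom_ext
      intro i
      show fwd ((Monoid.Coprod.lift (sideHom G eA hA) (sideHom G eB hB))
        (Monoid.Coprod.inr (ofAdd (Pi.single i 1)))) = _
      rw [Monoid.Coprod.lift_apply_inr, sideHom_single]
      rw [show fwd (raagOf G (eB.symm i).1) = raagFwdFun G C eA eB (eB.symm i).1 from
        raagFwd_of G C eA eB _]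
      unfold raagFwdFun
      rw [dif_neg (eB.symm i).2]
      have h2 : eB ⟨(eB.symm i).1, (eB.symm i).2⟩ = i := eB.apply_symm_apply i
      rw [h2]
      rfl

theorem raag_of_disconnected_no_sil {V : Type} [Fintype V] [Nonempty V]
    (G : SimpleGraph V) (hdisc : ¬ G.Connected)
    (hnosil : ∀ u v : V, ¬ FormsSIL G u v) :
    (∃ n m : ℕ, 1 ≤ n ∧ 1 ≤ m ∧
      Nonempty (RAAG G ≃*
        Monoid.Coprod (Multiplicative (Fin n → ℤ)) (Multiplicative (Fin m → ℤ)))) ∧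
    Nat.card G.ConnectedComponent = 2 ∧
    (∀ u v : V, G.connectedComponentMk u = G.connectedComponentMk v →
      u ≠ v → G.Adj u v) := by
  classical
  have hpre : ¬ G.Preconnected := fun hp => hdisc ⟨hp⟩
  rw [SimpleGraph.Preconnected] at hpre
  push_neg at hpre
  obtain ⟨u₀, v₀, h00⟩ := hpre
  have lift_reach : ∀ (S : Set V) (a b : S), (G.induce S).Reachable a b →
      G.Reachable a.1 b.1 := by
    intro S a b h
    simpa using h.map (SimpleGraph.Embedding.induce S).toHom
  have key : ∀ u v w : V, ¬ G.Adj u v → u ≠ v → ¬ G.Reachable w u →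
      ¬ G.Reachable w v → False := by
    intro u v w hadj hne hwu hwv
    apply hnosil u v
    have hwS : w ∈ SILSet G u v := fun h => hwu h.1.reachable
    refine ⟨hne, hadj, ⟨⟨w, hwS⟩, ?_, ?_⟩⟩
    · intro h
      exact hwu (lift_reach _ _ _ (SimpleGraph.ConnectedComponent.exact h))
    · intro h
      exact hwv (lift_reach _ _ _ (SimpleGraph.ConnectedComponent.exact h))
  have hcomplete : ∀ u v : V, G.connectedComponentMk u = G.connectedComponentMk v →
      u ≠ v → G.Adj u v := by
    intro u v h hne
    by_contra hadj
    have huv : G.Reachable u v := SimpleGraph.ConnectedComponent.exact h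
    obtain ⟨w, hw⟩ : ∃ w, ¬ G.Reachable w u := by
      by_cases h0 : G.Reachable u₀ u
      · exact ⟨v₀, fun hr => h00 (h0.trans hr.symm)⟩
      · exact ⟨u₀, h0⟩
    exact key u v w hadj hne hw (fun hr => hw (hr.trans huv.symm))
  have htwo : ∀ w : V, G.Reachable w u₀ ∨ G.Reachable w v₀ := by
    intro w
    by_contra h
    push_neg at h
    have hne : u₀ ≠ v₀ := fun he => h00 (he ▸ SimpleGraph.Reachable.refl u₀)
    have hadj : ¬ G.Adj u₀ v₀ := fun ha => h00 ha.reachable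
    exact key u₀ v₀ w hadj hne h.1 h.2
  refine ⟨?_, ?_, hcomplete⟩
  · set C := G.connectedComponentMk u₀ with hC
    have hBD : ∀ v : V, G.connectedComponentMk v ≠ C → G.Reachable v v₀ := by
      intro v hv
      rcases htwo v with h | h
      · exact absurd (SimpleGraph.ConnectedComponent.sound h) hv
      · exact h
    refine ⟨Fintype.card {v : V // G.connectedComponentMk v = C},
      Fintype.card {v : V // G.connectedComponentMk v ≠ C}, ?_, ?_, ?_⟩
    · have : Nonempty {v : V // G.connectedComponentMk v = C} := ⟨⟨u₀, rfl⟩⟩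
      exact Fintype.card_pos
    · have : Nonempty {v : V // G.connectedComponentMk v ≠ C} :=
        ⟨⟨v₀, fun h => h00 (SimpleGraph.ConnectedComponent.exact h).symm⟩⟩
      exact Fintype.card_pos
    · exact raag_iso G C (Fintype.equivFin _) (Fintype.equivFin _)
        (fun u v hu hv hne => hcomplete u v (hu.trans hv.symm) hne)
        (fun u v hu hv hne => hcomplete u v
          (SimpleGraph.ConnectedComponent.sound ((hBD u hu).trans (hBD v hv).symm)) hne)
  · rw [Nat.card_eq_two_iff]
    refine ⟨G.connectedComponentMk u₀, G.connectedComponentMk v₀, ?_, ?_⟩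
    · intro h
      exact h00 (SimpleGraph.ConnectedComponent.exact h)
    · rw [Set.eq_univ_iff_forall]
      intro c
      induction c using SimpleGraph.ConnectedComponent.ind with
      | _ w =>
        rcases htwo w with h | h
        · exact Set.mem_insert_iff.2 (Or.inl (SimpleGraph.ConnectedComponent.sound h))
        · exact Set.mem_insert_iff.2 (Or.inr (SimpleGraph.ConnectedComponent.sound h))
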